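/- Let H = [[A, −B_u Θ_{n_u} B_u^T], [−C^T Θ_{n_y} C, −A^T]]. Then for every s ∈ ℂ such that sI − A and sI + A^T are invertible, det(sI − A) · det(sI + A^T) · det(Θ_{n_u} − B_u^T(−sI − A^T)⁻¹ C^T Θ_{n_y} C (sI − A)⁻¹ B_u) = det(sI − H). -/

import Mathlib

open Matrix

/-- The block-diagonal matrix `diag(J, J, ..., J)` built from copies of
`J = [[0,1],[-1,0]]`, of size `m × m` (for `m` even). -/
def Theta (m : ℕ) : Matrix (Fin m) (Fin m) ℝ :=
  Matrix.of fun i j =>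
    if i.val % 2 = 0 ∧ j.val = i.val + 1 then (1 : ℝ)
    else if j.val % 2 = 0 ∧ i.val = j.val + 1 then (-1 : ℝ)
    else 0


lemma theta_block (m : ℕ) :
    Theta (2 + m) = (Matrix.fromBlocks (Theta 2) 0 0 (Theta m)).submatrix
      finSumFinEquiv.symm finSumFinEquiv.symm := by
  ext i j
  obtain ⟨p, rfl⟩ := finSumFinEquiv.surjective i
  obtain ⟨q, rfl⟩ := finSumFinEquiv.surjective j
  simp only [Matrix.submatrix_apply, Equiv.symm_apply_apply]
  rcases p with a | a <;> rcases q with b | b <;>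
    simp only [Theta, Matrix.of_apply, Matrix.fromBlocks_apply₁₁, Matrix.fromBlocks_apply₁₂,
      Matrix.fromBlocks_apply₂₁, Matrix.fromBlocks_apply₂₂, finSumFinEquiv_apply_left,
      finSumFinEquiv_apply_right, Fin.coe_castAdd, Fin.coe_natAdd, Matrix.zero_apply] <;>
    split_ifs <;> first | rfl | omega

lemma theta_two_sq : Theta 2 * Theta 2 = -1 := by
  ext i j
  fin_cases i <;> fin_cases j <;>
    norm_num [Matrix.mul_apply, Theta, Fin.sum_univ_two, Matrix.one_apply]

lemma theta_two_det : (Theta 2).det = 1 := by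
  simp [Matrix.det_fin_two, Theta]

lemma theta_aux : ∀ k m, m = 2 * k → Theta m * Theta m = -1 ∧ (Theta m).det = 1 := by
  intro k
  induction k with
  | zero =>
    intro m hm
    norm_num at hm
    subst hm
    constructor
    · apply Subsingleton.elim
    · simp [Matrix.det_isEmpty]
  | succ k ih =>
    intro m hm
    have hm' : m = 2 + 2 * k := by omega
    subst hm'
    obtain ⟨h1, h2⟩ := ih (2 * k) rfl
    rw [theta_block]
    constructor
    · rw [Matrix.submatrix_mul_equiv, Matrix.fromBlocks_multiply]
      simp only [Matrix.mul_zero, Matrix.zero_mul, add_zero, zero_add, theta_two_sq, h1]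
      have : (Matrix.fromBlocks (-1 : Matrix (Fin 2) (Fin 2) ℝ) 0 0
          (-1 : Matrix (Fin (2*k)) (Fin (2*k)) ℝ)) = -1 := by
        rw [show (0 : Matrix (Fin 2) (Fin (2*k)) ℝ) = -0 from (neg_zero).symm,
          show (0 : Matrix (Fin (2*k)) (Fin 2) ℝ) = -0 from (neg_zero).symm,
          ← Matrix.fromBlocks_neg, Matrix.fromBlocks_one]
      rw [this]
      ext i j
      simp [Matrix.one_apply]
    · rw [Matrix.det_submatrix_equiv_self, Matrix.det_fromBlocks_zero₂₁, theta_two_det, h2,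
        one_mul]

lemma theta_sq (m : ℕ) (hm : Even m) : Theta m * Theta m = -1 := by
  obtain ⟨r, rfl⟩ := hm
  exact (theta_aux r _ (by omega)).1

lemma theta_det (m : ℕ) (hm : Even m) : (Theta m).det = 1 := by
  obtain ⟨r, rfl⟩ := hm
  exact (theta_aux r _ (by omega)).2

lemma mapC_mul {a b c : Type*} [Fintype b] (M : Matrix a b ℝ) (N : Matrix b c ℝ) :
    (M * N).map Complex.ofReal = M.map Complex.ofReal * N.map Complex.ofReal :=
  Matrix.map_mul (f := Complex.ofRealHom)

lemma mapC_transpose {a b : Type*} (M : Matrix a b ℝ) :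
    Mᵀ.map Complex.ofReal = (M.map Complex.ofReal)ᵀ := rfl

lemma mapC_neg {a b : Type*} (M : Matrix a b ℝ) :
    (-M).map Complex.ofReal = -(M.map Complex.ofReal) := by
  ext i j; simp

lemma mapC_neg_one {a : Type*} [Fintype a] [DecidableEq a] :
    ((-1 : Matrix a a ℝ)).map Complex.ofReal = -1 := by
  ext i j; simp [Matrix.one_apply, apply_ite]

theorem stmt_3 (n nu ny : ℕ) (hn : Even n) (hn0 : 0 < n)
    (hnu : Even nu) (hnu0 : 0 < nu) (hny : Even ny) (hny0 : 0 < ny)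
    (A : Matrix (Fin n) (Fin n) ℝ) (Bu : Matrix (Fin n) (Fin nu) ℝ)
    (C : Matrix (Fin ny) (Fin n) ℝ)
    (H : Matrix (Fin n ⊕ Fin n) (Fin n ⊕ Fin n) ℝ)
    (hH : H = Matrix.fromBlocks A (-(Bu * Theta nu * Buᵀ))
      (-(Cᵀ * Theta ny * C)) (-Aᵀ))
    (s : ℂ)
    (Ac : Matrix (Fin n) (Fin n) ℂ) (hAc : Ac = A.map Complex.ofReal)
    (Buc : Matrix (Fin n) (Fin nu) ℂ) (hBuc : Buc = Bu.map Complex.ofReal)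
    (Cc : Matrix (Fin ny) (Fin n) ℂ) (hCc : Cc = C.map Complex.ofReal)
    (hs1 : IsUnit (s • (1 : Matrix (Fin n) (Fin n) ℂ) - Ac).det)
    (hs2 : IsUnit (s • (1 : Matrix (Fin n) (Fin n) ℂ) + Acᵀ).det) :
    (s • (1 : Matrix (Fin n) (Fin n) ℂ) - Ac).det *
        (s • (1 : Matrix (Fin n) (Fin n) ℂ) + Acᵀ).det *
        ((Theta nu).map Complex.ofReal -
          Bucᵀ * (-(s • 1) - Acᵀ)⁻¹ * Ccᵀ * (Theta ny).map Complex.ofReal * Cc *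
            (s • 1 - Ac)⁻¹ * Buc).det =
      (s • (1 : Matrix (Fin n ⊕ Fin n) (Fin n ⊕ Fin n) ℂ) - H.map Complex.ofReal).det := by
  subst hH hAc hBuc hCc
  set Ac := A.map Complex.ofReal with hAc
  set Buc := Bu.map Complex.ofReal with hBuc
  set Cc := C.map Complex.ofReal with hCc
  set Tu := (Theta nu).map Complex.ofReal with hTu
  set Ty := (Theta ny).map Complex.ofReal with hTy
  set S1 := s • (1 : Matrix (Fin n) (Fin n) ℂ) - Ac with hS1
  set S2 := s • (1 : Matrix (Fin n) (Fin n) ℂ) + Acᵀ with hS2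
  have hTu2 : Tu * Tu = -1 := by
    rw [hTu, ← mapC_mul, theta_sq nu hnu, mapC_neg_one]
  have hTudet : Tu.det = 1 := by
    have h := RingHom.map_det Complex.ofRealHom (Theta nu)
    rw [theta_det nu hnu, _root_.map_one] at h
    exact (by simpa [RingHom.mapMatrix_apply] using h.symm :
      ((Theta nu).map ⇑Complex.ofRealHom).det = 1)
  haveI : Invertible S1 := Matrix.invertibleOfIsUnitDet _ hs1
  -- block decomposition of the RHS
  have blockEq : s • (1 : Matrix (Fin n ⊕ Fin n) (Fin n ⊕ Fin n) ℂ) -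
      (Matrix.fromBlocks A (-(Bu * Theta nu * Buᵀ)) (-(Cᵀ * Theta ny * C)) (-Aᵀ)).map
        Complex.ofReal
      = Matrix.fromBlocks S1 (Buc * Tu * Bucᵀ) (Ccᵀ * Ty * Cc) S2 := by
    rw [Matrix.fromBlocks_map, ← Matrix.fromBlocks_one, Matrix.fromBlocks_smul,
      sub_eq_add_neg, Matrix.fromBlocks_neg, Matrix.fromBlocks_add]
    have e11 : s • (1 : Matrix (Fin n) (Fin n) ℂ) + -Ac = S1 := by
      rw [hS1, sub_eq_add_neg]
    have e12 : s • (0 : Matrix (Fin n) (Fin n) ℂ) +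
        -((-(Bu * Theta nu * Buᵀ)).map Complex.ofReal) = Buc * Tu * Bucᵀ := by
      rw [smul_zero, zero_add, mapC_neg, neg_neg, mapC_mul, mapC_mul, mapC_transpose]
    have e21 : s • (0 : Matrix (Fin n) (Fin n) ℂ) +
        -((-(Cᵀ * Theta ny * C)).map Complex.ofReal) = Ccᵀ * Ty * Cc := by
      rw [smul_zero, zero_add, mapC_neg, neg_neg, mapC_mul, mapC_mul, mapC_transpose]
    have e22 : s • (1 : Matrix (Fin n) (Fin n) ℂ) + -((-Aᵀ).map Complex.ofReal) = S2 := by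
      rw [mapC_neg, mapC_transpose, neg_neg, hS2]
    rw [e11, e12, e21, e22]
  rw [blockEq, Matrix.det_fromBlocks₁₁, Matrix.invOf_eq_nonsing_inv]
  have hinvneg : (-(s • (1 : Matrix (Fin n) (Fin n) ℂ)) - Acᵀ)⁻¹ = -(S2⁻¹) := by
    have h : -(s • (1 : Matrix (Fin n) (Fin n) ℂ)) - Acᵀ = -S2 := by rw [hS2]; abel
    rw [h]
    apply Matrix.inv_eq_right_inv
    rw [Matrix.neg_mul, Matrix.mul_neg, neg_neg, Matrix.mul_nonsing_inv _ hs2]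
  rw [hinvneg]
  have hL : Tu - Bucᵀ * -S2⁻¹ * Ccᵀ * Ty * Cc * S1⁻¹ * Buc
      = Tu * (1 - Tu * (Bucᵀ * (S2⁻¹ * (Ccᵀ * (Ty * (Cc * (S1⁻¹ * Buc))))))) := by
    have hX : Bucᵀ * -S2⁻¹ * Ccᵀ * Ty * Cc * S1⁻¹ * Buc
        = -(Bucᵀ * (S2⁻¹ * (Ccᵀ * (Ty * (Cc * (S1⁻¹ * Buc)))))) := by
      simp only [Matrix.mul_neg, Matrix.neg_mul, Matrix.mul_assoc]
    rw [hX, sub_neg_eq_add, Matrix.mul_sub, Matrix.mul_one, ← Matrix.mul_assoc Tu Tu _, hTu2,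
      Matrix.neg_mul, Matrix.one_mul, sub_neg_eq_add]
  rw [hL, Matrix.det_mul, hTudet, one_mul]
  have hR : S2 - Ccᵀ * Ty * Cc * S1⁻¹ * (Buc * Tu * Bucᵀ)
      = S2 * (1 - (S2⁻¹ * (Ccᵀ * (Ty * (Cc * (S1⁻¹ * Buc))))) * (Tu * Bucᵀ)) := by
    rw [Matrix.mul_sub, Matrix.mul_one]
    congr 1
    simp only [← Matrix.mul_assoc]
    rw [Matrix.mul_nonsing_inv _ hs2, Matrix.one_mul]
  rw [hR, Matrix.det_mul,
    Matrix.det_one_sub_mul_comm (S2⁻¹ * (Ccᵀ * (Ty * (Cc * (S1⁻¹ * Buc))))) (Tu * Bucᵀ)]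
  have hassoc : Tu * Bucᵀ * (S2⁻¹ * (Ccᵀ * (Ty * (Cc * (S1⁻¹ * Buc)))))
      = Tu * (Bucᵀ * (S2⁻¹ * (Ccᵀ * (Ty * (Cc * (S1⁻¹ * Buc)))))) := by
    simp only [Matrix.mul_assoc]
  rw [hassoc]
  ring
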